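/- arXiv:1311.2774 — 2 statements merged into one kernel-verified Lean document; each statement's English description precedes it below -/
import Mathlib

section
/- Let p be a prime, R a perfect 𝔽_p-algebra, and n ≥ 1 an integer. Then for every ν ≥ n one has the equality of ideals I^n = I^ν + p^n·ℤR in ℤR. -/
open MonoidAlgebra

/-- `ℤR`: the monoid algebra over `ℤ` of the multiplicative monoid `(R, ·)`. -/
abbrev ZR (R : Type*) [CommRing R] : Type _ := MonoidAlgebra ℤ R

/-- The canonical ring homomorphism `π : ℤR → R`, `Σ n_r [r] ↦ Σ n_r r`. -/
noncomputable def piHom (R : Type*) [CommRing R] : ZR R →+* R :=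
  (MonoidAlgebra.lift ℤ R R (MonoidHom.id R)).toRingHom

/-- The ideal `I = ker (π : ℤR → R)`. -/
noncomputable def Iid (R : Type*) [CommRing R] : Ideal (ZR R) := RingHom.ker (piHom R)

lemma pi_of (R : Type*) [CommRing R] (r : R) : piHom R (MonoidAlgebra.of ℤ R r) = r := by
  simp [piHom]

lemma pi_single (R : Type*) [CommRing R] (r : R) :
    piHom R (MonoidAlgebra.single r (1 : ℤ)) = r := pi_of R r

lemma frobQ {Q : Type*} [CommRing Q] {p : ℕ} (hp : p.Prime) (hpQ : (p : Q) = 0) (x y : Q) :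
    (x + y) ^ p = x ^ p + y ^ p := by
  obtain ⟨r, hr⟩ := exists_add_pow_prime_eq hp x y
  rw [hr, hpQ, zero_mul, zero_mul, zero_mul, add_zero]

section Main
variable (p : ℕ) [Fact p.Prime] (R : Type*) [CommRing R] [CharP R p]

set_option linter.unusedSectionVars false in
lemma p_mem : (p : ZR R) ∈ Iid R := by
  simp [Iid, RingHom.mem_ker, map_natCast, CharP.cast_eq_zero]

lemma of_zero_mem : MonoidAlgebra.of ℤ R (0 : R) ∈ Iid R := by
  rw [Iid, RingHom.mem_ker, pi_of]

lemma of_zero_mem_sq : MonoidAlgebra.of ℤ R (0 : R) ∈ Iid R ^ 2 := by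
  have h00 : MonoidAlgebra.of ℤ R (0 : R) =
      MonoidAlgebra.of ℤ R 0 * MonoidAlgebra.of ℤ R 0 := by
    rw [← map_mul, mul_zero]
  rw [pow_two, h00]
  exact Ideal.mul_mem_mul (of_zero_mem R) (of_zero_mem R)

lemma step2 (hperf : Function.Bijective fun x : R => x ^ p) :
    Iid R ≤ Iid R ^ 2 ⊔ Ideal.span {(p : ZR R)} := by
  set J := Iid R ^ 2 ⊔ Ideal.span {(p : ZR R)} with hJdef
  have hpQ : ((p : ℕ) : ZR R ⧸ J) = 0 := by
    rw [← map_natCast (Ideal.Quotient.mk J)]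
    exact Ideal.Quotient.eq_zero_iff_mem.2 (Ideal.mem_sup_right (Ideal.subset_span rfl))
  have hp' : p.Prime := Fact.out
  have hadd : ∀ a b : R, Ideal.Quotient.mk J (MonoidAlgebra.of ℤ R (a + b)) =
      Ideal.Quotient.mk J (MonoidAlgebra.of ℤ R a) +
      Ideal.Quotient.mk J (MonoidAlgebra.of ℤ R b) := by
    intro a b
    obtain ⟨α, hα⟩ := hperf.2 a
    obtain ⟨β, hβ⟩ := hperf.2 b
    simp only at hα hβ
    set e : ZR R := MonoidAlgebra.of ℤ R α + MonoidAlgebra.of ℤ R β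
        - MonoidAlgebra.of ℤ R (α + β) with he_def
    have he : e ∈ Iid R := by
      rw [Iid, RingHom.mem_ker, he_def, map_sub, map_add, pi_of, pi_of, pi_of]
      ring
    have hep : Ideal.Quotient.mk J e ^ p = 0 := by
      have h2 : p = 2 + (p - 2) := by have := hp'.two_le; omega
      have hsq : Ideal.Quotient.mk J e ^ 2 = 0 := by
        rw [← map_pow]
        exact Ideal.Quotient.eq_zero_iff_mem.2
          (Ideal.mem_sup_left (Ideal.pow_mem_pow he 2))
      rw [h2, pow_add, hsq, zero_mul]
    have hab : a + b = (α + β) ^ p := by rw [add_pow_char, hα, hβ]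
    have hofab : MonoidAlgebra.of ℤ R (a + b) = (MonoidAlgebra.of ℤ R (α + β)) ^ p := by
      rw [hab, map_pow]
    have hofa : MonoidAlgebra.of ℤ R a = (MonoidAlgebra.of ℤ R α) ^ p := by
      rw [← hα, map_pow]
    have hofb : MonoidAlgebra.of ℤ R b = (MonoidAlgebra.of ℤ R β) ^ p := by
      rw [← hβ, map_pow]
    have hsplit : MonoidAlgebra.of ℤ R (α + β) =
        MonoidAlgebra.of ℤ R α + MonoidAlgebra.of ℤ R β + (-e) := by
      rw [he_def]; ring
    have hnep : (-(Ideal.Quotient.mk J) e) ^ p = 0 := by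
      rw [show -(Ideal.Quotient.mk J) e = -1 * (Ideal.Quotient.mk J) e by ring,
        mul_pow, hep, mul_zero]
    rw [hofab, hofa, hofb, map_pow, map_pow, map_pow, hsplit,
      map_add, map_add, map_neg, frobQ hp' hpQ, frobQ hp' hpQ, hnep, add_zero]
  -- the additive map `r ↦ mk [r]`
  let g : R →+ ZR R ⧸ J :=
    { toFun := fun r => Ideal.Quotient.mk J (MonoidAlgebra.of ℤ R r)
      map_zero' := Ideal.Quotient.eq_zero_iff_mem.2 (Ideal.mem_sup_left (of_zero_mem_sq R))
      map_add' := hadd }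
  have main : ∀ x : ZR R, Ideal.Quotient.mk J x = g (piHom R x) := by
    intro x
    induction x using MonoidAlgebra.induction_on with
    | of r => simp [g, pi_single, MonoidAlgebra.of_apply]
    | add f f' hf hf' => rw [map_add, map_add, map_add, hf, hf']
    | smul n f hf =>
        rw [Algebra.smul_def, eq_intCast, map_mul, map_mul,
          map_intCast, map_intCast, hf, ← zsmul_eq_mul, ← zsmul_eq_mul, map_zsmul]
  intro x hx
  have h0 : piHom R x = 0 := hx
  have hmx := main x
  rw [h0, map_zero] at hmx
  exact Ideal.Quotient.eq_zero_iff_mem.1 hmx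

lemma step3 (hperf : Function.Bijective fun x : R => x ^ p) :
    ∀ n : ℕ, 1 ≤ n → Iid R ^ n ≤ Iid R ^ (n + 1) ⊔ Ideal.span {(p : ZR R) ^ n} := by
  intro n hn
  induction n with
  | zero => omega
  | succ m ih =>
    rcases Nat.eq_or_lt_of_le hn with h1 | h1
    · -- m + 1 = 1
      have hm : m = 0 := by omega
      subst hm
      simpa [pow_one] using step2 p R hperf
    · have hm : 1 ≤ m := by omega
      have ihm := ih hm
      calc Iid R ^ (m + 1) = Iid R ^ m * Iid R := pow_succ _ _
        _ ≤ (Iid R ^ (m + 1) ⊔ Ideal.span {(p : ZR R) ^ m}) * Iid R :=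
            Ideal.mul_mono_left ihm
        _ = Iid R ^ (m + 1) * Iid R ⊔ Ideal.span {(p : ZR R) ^ m} * Iid R :=
            Ideal.sup_mul _ _ _
        _ ≤ Iid R ^ (m + 1 + 1) ⊔ Ideal.span {(p : ZR R) ^ (m + 1)} := by
            apply sup_le
            · exact le_sup_of_le_left (le_of_eq (pow_succ _ _).symm)
            · calc Ideal.span {(p : ZR R) ^ m} * Iid R
                  ≤ Ideal.span {(p : ZR R) ^ m} * (Iid R ^ 2 ⊔ Ideal.span {(p : ZR R)}) :=
                    Ideal.mul_mono_right (step2 p R hperf)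
                _ = Ideal.span {(p : ZR R) ^ m} * Iid R ^ 2 ⊔
                      Ideal.span {(p : ZR R) ^ m} * Ideal.span {(p : ZR R)} :=
                    Ideal.mul_sup _ _ _
                _ ≤ Iid R ^ (m + 1 + 1) ⊔ Ideal.span {(p : ZR R) ^ (m + 1)} := by
                    apply sup_le
                    · apply le_sup_of_le_left
                      calc Ideal.span {(p : ZR R) ^ m} * Iid R ^ 2
                          ≤ Iid R ^ m * Iid R ^ 2 := by
                            apply Ideal.mul_mono_left
                            rw [Ideal.span_le]
                            intro y hy
                            rw [Set.mem_singleton_iff] at hy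
                            subst hy
                            exact Ideal.pow_mem_pow (p_mem p R) m
                        _ = Iid R ^ (m + 1 + 1) := by rw [← pow_add]
                    · apply le_sup_of_le_right
                      rw [Ideal.span_singleton_mul_span_singleton, ← pow_succ]
end Main

/-- Let `p` be a prime, `R` a perfect `𝔽_p`-algebra and `n ≥ 1`.
Then for every `ν ≥ n` one has `I^n = I^ν + p^n·ℤR` as ideals of `ℤR`. -/
theorem statement2 (p : ℕ) [Fact p.Prime] (R : Type*) [CommRing R] [CharP R p]
    (hperf : Function.Bijective fun x : R => x ^ p)
    (n : ℕ) (hn : 1 ≤ n) :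
    ∀ ν : ℕ, n ≤ ν → Iid R ^ n = Iid R ^ ν ⊔ Ideal.span {(p : ZR R) ^ n} := by
  have hpn : Ideal.span {(p : ZR R) ^ n} ≤ Iid R ^ n := by
    rw [Ideal.span_le]
    intro y hy
    rw [Set.mem_singleton_iff] at hy
    subst hy
    exact Ideal.pow_mem_pow (p_mem p R) n
  intro ν hν
  induction ν, hν using Nat.le_induction with
  | base => exact (sup_eq_left.2 hpn).symm
  | succ ν hν ih =>
    refine le_antisymm ?_ (sup_le (Ideal.pow_le_pow_right (by omega)) hpn)
    calc Iid R ^ n = Iid R ^ ν ⊔ Ideal.span {(p : ZR R) ^ n} := ih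
      _ ≤ (Iid R ^ (ν + 1) ⊔ Ideal.span {(p : ZR R) ^ ν}) ⊔ Ideal.span {(p : ZR R) ^ n} :=
          sup_le_sup_right (step3 p R hperf ν (by omega)) _
      _ ≤ Iid R ^ (ν + 1) ⊔ Ideal.span {(p : ZR R) ^ n} := by
          rw [sup_assoc]
          apply sup_le_sup_left
          exact sup_le (Ideal.span_singleton_le_span_singleton.2 (pow_dvd_pow _ hν)) le_rfl
end

section
/- Let p be a prime and f : R₁ → R₂ a ring homomorphism of perfect 𝔽_p-algebras, and let C(f) : C(R₁) → C(R₂) be the induced ring homomorphism (induced functorially by the multiplicative map r ↦ [f(r)]). If f is injective then C(f) is injective, and if f is surjective then C(f) is surjective. -/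
set_option synthInstance.maxHeartbeats 1000000
set_option maxHeartbeats 1000000

open MonoidAlgebra

/-- The inverse limit `lim_ν A⧸I^ν` realized as a subring of the product `Π ν, A⧸I^ν`
(families compatible under the canonical factor maps). -/
def Clim (A : Type*) [CommRing A] (I : Ideal A) : Subring (Π ν : ℕ, A ⧸ I ^ ν) where
  carrier := { x | ∀ ⦃m ν : ℕ⦄ (h : m ≤ ν),
    Ideal.Quotient.factor (Ideal.pow_le_pow_right h) (x ν) = x m }
  zero_mem' := by intro m ν h; simp
  one_mem' := by intro m ν h; simp
  add_mem' := by intro x y hx hy m ν h; simp only [Pi.add_apply, map_add, hx h, hy h]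
  mul_mem' := by intro x y hx hy m ν h; simp only [Pi.mul_apply, map_mul, hx h, hy h]
  neg_mem' := by intro x hx m ν h; simp only [Pi.neg_apply, map_neg, hx h]

/-- The projection of the completion `lim_ν A⧸I^ν` onto its `ν`-th level `A⧸I^ν`. -/
def Ceval (A : Type*) [CommRing A] (I : Ideal A) (ν : ℕ) : Clim A I →+* A ⧸ I ^ ν :=
  (Pi.evalRingHom _ ν).comp (Clim A I).subtype

/-- The canonical map `A → lim_ν A⧸I^ν`. -/
def CofRingHom (A : Type*) [CommRing A] (I : Ideal A) : A →+* Clim A I where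
  toFun a := ⟨fun ν => Ideal.Quotient.mk _ a, fun _ _ _ => Ideal.Quotient.factor_mk _ _⟩
  map_one' := rfl
  map_mul' _ _ := rfl
  map_zero' := rfl
  map_add' _ _ := rfl

/-- `C(R)`: the `I`-adic completion of `ℤR`. -/
noncomputable abbrev CR (R : Type*) [CommRing R] : Type _ := Clim (ZR R) (Iid R)

/-- The canonical projection `π̄ : C(R) → R` induced by `π`. -/
noncomputable def CtoR (R : Type*) [CommRing R] : CR R →+* R :=
  (Ideal.Quotient.lift (Iid R) (piHom R) (fun _ ha => ha)).comp
    (((Ideal.quotEquivOfEq (pow_one (Iid R))).toRingHom).comp (Ceval (ZR R) (Iid R) 1))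

/-- The ring homomorphism `ℤR₁ → ℤR₂` induced by a ring homomorphism `f : R₁ → R₂`
(via the multiplicative map `r ↦ [f r]`). -/
noncomputable def ZRmap {R₁ R₂ : Type*} [CommRing R₁] [CommRing R₂] (f : R₁ →+* R₂) :
    ZR R₁ →+* ZR R₂ :=
  MonoidAlgebra.mapDomainRingHom ℤ f.toMonoidHom

lemma piHom_comp_ZRmap {R₁ R₂ : Type*} [CommRing R₁] [CommRing R₂] (f : R₁ →+* R₂) :
    (piHom R₂).comp (ZRmap f) = f.comp (piHom R₁) := by
  apply MonoidAlgebra.ringHom_ext <;> intro a <;>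
    simp [ZRmap, piHom, MonoidAlgebra.lift_single, Finsupp.mapDomain_single]

lemma Iid_pow_le {R₁ R₂ : Type*} [CommRing R₁] [CommRing R₂] (f : R₁ →+* R₂) (ν : ℕ) :
    Iid R₁ ^ ν ≤ (Iid R₂ ^ ν).comap (ZRmap f) := by
  rw [← Ideal.map_le_iff_le_comap, Ideal.map_pow]
  refine Ideal.pow_right_mono ?_ ν
  rw [Ideal.map_le_iff_le_comap]
  intro x hx
  have : piHom R₂ (ZRmap f x) = f (piHom R₁ x) := by
    have := congrArg (fun g : ZR R₁ →+* R₂ => g x) (piHom_comp_ZRmap f)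
    simpa using this
  have hx0 : piHom R₁ x = 0 := hx
  simp only [Ideal.mem_comap]
  exact RingHom.mem_ker.mpr (by rw [this, hx0, map_zero])

/-- The ring homomorphism `C(f) : C(R₁) → C(R₂)` functorially induced by `f : R₁ → R₂`. -/
noncomputable def Cmap {R₁ R₂ : Type*} [CommRing R₁] [CommRing R₂] (f : R₁ →+* R₂) :
    CR R₁ →+* CR R₂ :=
  RingHom.codRestrict
    ((Pi.ringHom fun ν => (Ideal.quotientMap (Iid R₂ ^ ν) (ZRmap f) (Iid_pow_le f ν)).comp
        (Pi.evalRingHom _ ν)).comp (Clim (ZR R₁) (Iid R₁)).subtype)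
    (Clim (ZR R₂) (Iid R₂))
    (by
      intro x
      intro m ν h
      obtain ⟨a, ha⟩ := Ideal.Quotient.mk_surjective ((x : Π ν, ZR R₁ ⧸ Iid R₁ ^ ν) ν)
      have hm : (x : Π ν, ZR R₁ ⧸ Iid R₁ ^ ν) m = Ideal.Quotient.mk _ a := by
        rw [← x.2 h, ← ha, Ideal.Quotient.factor_mk]
      change Ideal.Quotient.factor (Ideal.pow_le_pow_right h)
          (Ideal.quotientMap (Iid R₂ ^ ν) (ZRmap f) (Iid_pow_le f ν)
            ((x : Π ν, ZR R₁ ⧸ Iid R₁ ^ ν) ν)) =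
        Ideal.quotientMap (Iid R₂ ^ m) (ZRmap f) (Iid_pow_le f m) ((x : Π ν, ZR R₁ ⧸ Iid R₁ ^ ν) m)
      rw [← ha, hm, Ideal.quotientMap_mk, Ideal.quotientMap_mk, Ideal.Quotient.factor_mk])

/-! ### Auxiliary lemmas -/

section Aux

variable {p : ℕ} [Fact p.Prime]

/-- Two ring homomorphisms out of `ℤR` agreeing on all `[r]` are equal. -/
lemma ZR_ringHom_ext {R : Type*} {S : Type*} [CommRing R] [Ring S] {f g : ZR R →+* S}
    (h : ∀ r : R, f (MonoidAlgebra.of ℤ R r) = g (MonoidAlgebra.of ℤ R r)) : f = g := by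
  refine MonoidAlgebra.ringHom_ext (fun b => ?_) (fun a => by simpa using h a)
  have hb : (MonoidAlgebra.single (1 : R) b) = b • (1 : ZR R) := by
    rw [MonoidAlgebra.one_def, MonoidAlgebra.smul_single', mul_one]
  rw [hb, map_zsmul, map_zsmul, map_one, map_one]

lemma piHom_of {R : Type*} [CommRing R] (r : R) : piHom R (MonoidAlgebra.of ℤ R r) = r := by
  simp [piHom]

lemma of_mem_Iid_iff {R : Type*} [CommRing R] {a : ZR R} : a ∈ Iid R ↔ piHom R a = 0 :=
  RingHom.mem_ker

lemma ZRmap_of {R₁ R₂ : Type*} [CommRing R₁] [CommRing R₂] (f : R₁ →+* R₂) (r : R₁) :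
    ZRmap f (MonoidAlgebra.of ℤ R₁ r) = MonoidAlgebra.of ℤ R₂ (f r) := by
  simp [ZRmap, MonoidAlgebra.of_apply, Finsupp.mapDomain_single]

lemma p_mem_Iid (R : Type*) [CommRing R] [CharP R p] : ((p : ℕ) : ZR R) ∈ Iid R := by
  rw [of_mem_Iid_iff, map_natCast]
  exact CharP.cast_eq_zero R p

/-- The additive extension of the Teichmüller map, `θ : ℤR → W(R)`, `Σ n_r [r] ↦ Σ n_r τ(r)`. -/
noncomputable def theta (p : ℕ) [Fact p.Prime] (R : Type*) [CommRing R] :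
    ZR R →+* WittVector p R :=
  (MonoidAlgebra.lift ℤ (WittVector p R) R (WittVector.teichmuller p)).toRingHom

lemma theta_of {R : Type*} [CommRing R] (r : R) :
    theta p R (MonoidAlgebra.of ℤ R r) = WittVector.teichmuller p r := by
  simp [theta]

lemma ghostComponent_zero_eq {R : Type*} [CommRing R] (x : WittVector p R) :
    WittVector.ghostComponent 0 x = x.coeff 0 := by
  rw [WittVector.ghostComponent_apply, wittPolynomial_zero, MvPolynomial.aeval_X]

lemma coeff_zero_theta {R : Type*} [CommRing R] (a : ZR R) :
    (theta p R a).coeff 0 = piHom R a := by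
  have h : (WittVector.ghostComponent (p := p) 0).comp (theta p R) = piHom R := by
    apply ZR_ringHom_ext
    intro r
    rw [RingHom.comp_apply, theta_of, piHom_of, ghostComponent_zero_eq,
      WittVector.teichmuller_coeff_zero]
  rw [← ghostComponent_zero_eq, ← RingHom.comp_apply, h]

section WittFacts

variable {R : Type*} [CommRing R] [CharP R p]

lemma versch_inj : Function.Injective (WittVector.verschiebung (p := p) (R := R)) := by
  intro x y h
  ext n
  have := congrArg (fun w : WittVector p R => w.coeff (n + 1)) h
  simpa [WittVector.verschiebung_coeff_succ] using this

lemma mul_p_coeff_zero (x : WittVector p R) : (x * (p : WittVector p R)).coeff 0 = 0 := by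
  rw [← WittVector.verschiebung_frobenius, WittVector.verschiebung_coeff_zero]

lemma mul_p_coeff_succ (x : WittVector p R) (n : ℕ) :
    (x * (p : WittVector p R)).coeff (n + 1) = (WittVector.frobenius x).coeff n := by
  rw [← WittVector.verschiebung_frobenius, WittVector.verschiebung_coeff_succ]

lemma mul_pow_p_coeff (ν : ℕ) (u : WittVector p R) {i : ℕ} (hi : i < ν) :
    (u * (p : WittVector p R) ^ ν).coeff i = 0 := by
  induction ν generalizing u i with
  | zero => omega
  | succ ν ih =>
    have h : u * (p : WittVector p R) ^ (ν + 1) = (u * (p : WittVector p R) ^ ν) * p := by ring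
    rw [h]
    cases i with
    | zero => exact mul_p_coeff_zero _
    | succ i =>
      rw [mul_p_coeff_succ]
      have h2 : WittVector.frobenius (u * (p : WittVector p R) ^ ν)
          = (WittVector.frobenius u) * (p : WittVector p R) ^ ν := by
        rw [map_mul, map_pow, map_natCast]
      rw [h2]
      exact ih _ (by omega)

lemma mul_p_cancel {x y : WittVector p R} [PerfectRing R p]
    (h : x * (p : WittVector p R) = y * (p : WittVector p R)) : x = y := by
  have h2 : WittVector.verschiebung (WittVector.frobenius x)
      = WittVector.verschiebung (WittVector.frobenius y) := by
    rw [WittVector.verschiebung_frobenius, WittVector.verschiebung_frobenius, h]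
  exact (WittVector.frobenius_bijective p R).1 (versch_inj h2)

lemma mul_pow_p_cancel [PerfectRing R p] (ν : ℕ) : ∀ {x y : WittVector p R},
    x * (p : WittVector p R) ^ ν = y * (p : WittVector p R) ^ ν → x = y := by
  induction ν with
  | zero => intro x y h; simpa using h
  | succ ν ih =>
    intro x y h
    have h2 : (x * p) * (p : WittVector p R) ^ ν = (y * p) * (p : WittVector p R) ^ ν := by
      calc (x * p) * (p : WittVector p R) ^ ν = x * (p : WittVector p R) ^ (ν + 1) := by ring
        _ = y * (p : WittVector p R) ^ (ν + 1) := h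
        _ = (y * p) * (p : WittVector p R) ^ ν := by ring
    exact mul_p_cancel (ih h2)

lemma exists_eq_mul_pow_p [PerfectRing R p] (ν : ℕ) (w : WittVector p R)
    (h : ∀ i < ν, w.coeff i = 0) : ∃ u, w = u * (p : WittVector p R) ^ ν := by
  induction ν generalizing w with
  | zero => exact ⟨w, by simp⟩
  | succ ν ih =>
    set w' : WittVector p R := WittVector.mk p (fun i => w.coeff (i + 1)) with hw'
    have hV : w = WittVector.verschiebung w' := by
      ext n
      cases n with
      | zero =>
        rw [WittVector.verschiebung_coeff_zero]
        exact h 0 (Nat.succ_pos _)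
      | succ n =>
        rw [WittVector.verschiebung_coeff_succ, hw', WittVector.coeff_mk]
    obtain ⟨u', hu'⟩ := ih w' (fun i hi => by
      rw [hw', WittVector.coeff_mk]; exact h (i + 1) (by omega))
    obtain ⟨u, hu⟩ := (WittVector.frobenius_bijective p R).2 u'
    have key : ∀ z : WittVector p R,
        WittVector.verschiebung (z * (p : WittVector p R) ^ ν)
          = WittVector.verschiebung z * (p : WittVector p R) ^ ν := by
      intro z
      have h1 : z * (p : WittVector p R) ^ ν = (p ^ ν : ℕ) • z := by
        rw [nsmul_eq_mul, Nat.cast_pow]; ring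
      have h2 : WittVector.verschiebung z * (p : WittVector p R) ^ ν
          = (p ^ ν : ℕ) • WittVector.verschiebung z := by
        rw [nsmul_eq_mul, Nat.cast_pow]; ring
      rw [h1, h2, AddMonoidHom.map_nsmul]
    refine ⟨u, ?_⟩
    calc w = WittVector.verschiebung (WittVector.frobenius u * (p : WittVector p R) ^ ν) := by
          rw [hV, hu', hu]
      _ = WittVector.verschiebung (WittVector.frobenius u) * (p : WittVector p R) ^ ν := key _
      _ = (u * p) * (p : WittVector p R) ^ ν := by rw [WittVector.verschiebung_frobenius]
      _ = u * (p : WittVector p R) ^ (ν + 1) := by ring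

end WittFacts

/-- Easy direction: `θ(I^ν) ⊆ p^ν W(R)`. -/
lemma theta_mem_pow {R : Type*} [CommRing R] [CharP R p] [PerfectRing R p] (ν : ℕ) {a : ZR R}
    (ha : a ∈ (Iid R) ^ ν) : ∃ u, theta p R a = u * (p : WittVector p R) ^ ν := by
  have h1 : Iid R ≤ (Ideal.span {(p : WittVector p R)}).comap (theta p R) := by
    intro b hb
    rw [Ideal.mem_comap, Ideal.mem_span_singleton]
    obtain ⟨u, hu⟩ := exists_eq_mul_pow_p (p := p) 1 (theta p R b) (fun i hi => by
      interval_cases i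
      rw [coeff_zero_theta]
      exact of_mem_Iid_iff.mp hb)
    exact ⟨u, by rw [hu]; ring⟩
  have h2 : (Iid R) ^ ν ≤ ((Ideal.span {(p : WittVector p R)}) ^ ν).comap (theta p R) := by
    rw [← Ideal.map_le_iff_le_comap, Ideal.map_pow]
    exact Ideal.pow_right_mono (Ideal.map_le_iff_le_comap.mpr h1) ν
  have h3 := h2 ha
  rw [Ideal.mem_comap, Ideal.span_singleton_pow, Ideal.mem_span_singleton] at h3
  obtain ⟨u, hu⟩ := h3
  exact ⟨u, by rw [hu]; ring⟩

/-- Key lemma: for a perfect `𝔽_p`-algebra `R`, `I ⊆ pℤR + I²`. -/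
lemma Iid_le_span_p_sup_sq (R : Type*) [CommRing R] [CharP R p]
    (hperf : Function.Bijective fun x : R => x ^ p) :
    Iid R ≤ Ideal.span {((p : ℕ) : ZR R)} ⊔ (Iid R) ^ 2 := by
  set J : Ideal (ZR R) := Ideal.span {((p : ℕ) : ZR R)} ⊔ (Iid R) ^ 2 with hJ
  -- the basic generators of `I` lie in `J`
  have h0 : MonoidAlgebra.of ℤ R 0 ∈ J := by
    have hm : MonoidAlgebra.of ℤ R 0 ∈ Iid R := by rw [of_mem_Iid_iff, piHom_of]
    have heq : MonoidAlgebra.of ℤ R 0 = (MonoidAlgebra.of ℤ R 0) ^ 2 := by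
      rw [← map_pow]; norm_num
    refine Submodule.mem_sup_right ?_
    rw [heq]
    exact Ideal.pow_mem_pow hm 2
  have hd : ∀ x y : R, MonoidAlgebra.of ℤ R x + MonoidAlgebra.of ℤ R y
      - MonoidAlgebra.of ℤ R (x + y) ∈ J := by
    intro x y
    obtain ⟨a, ha⟩ := hperf.2 x
    obtain ⟨b, hb⟩ := hperf.2 y
    simp only at ha hb
    have hc : (a + b) ^ p = x + y := by rw [add_pow_char, ha, hb]
    rw [← hc, ← ha, ← hb, ← Ideal.Quotient.eq_zero_iff_mem]
    by_cases hs : Subsingleton (ZR R ⧸ J)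
    · exact Subsingleton.elim _ _
    haveI : Nontrivial (ZR R ⧸ J) := not_subsingleton_iff_nontrivial.mp hs
    have hp0 : ((p : ℕ) : ZR R ⧸ J) = 0 := by
      rw [← map_natCast (Ideal.Quotient.mk J), Ideal.Quotient.eq_zero_iff_mem]
      exact Submodule.mem_sup_left (Ideal.mem_span_singleton_self _)
    haveI : CharP (ZR R ⧸ J) p := (CharP.charP_iff_prime_eq_zero Fact.out).mpr hp0
    set A := Ideal.Quotient.mk J (MonoidAlgebra.of ℤ R a) with hA
    set B := Ideal.Quotient.mk J (MonoidAlgebra.of ℤ R b) with hB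
    set D := Ideal.Quotient.mk J (MonoidAlgebra.of ℤ R a + MonoidAlgebra.of ℤ R b
      - MonoidAlgebra.of ℤ R (a + b)) with hD
    have hDsq : D ^ 2 = 0 := by
      rw [hD, ← map_pow, Ideal.Quotient.eq_zero_iff_mem]
      refine Submodule.mem_sup_right ?_
      have hmem : MonoidAlgebra.of ℤ R a + MonoidAlgebra.of ℤ R b
          - MonoidAlgebra.of ℤ R (a + b) ∈ Iid R := by
        rw [of_mem_Iid_iff, map_sub, map_add, piHom_of, piHom_of, piHom_of, sub_self]
      exact Ideal.pow_mem_pow hmem 2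
    have hDp : D ^ p = 0 := by
      obtain ⟨k, hk⟩ := Nat.exists_eq_add_of_le (Fact.out : p.Prime).two_le
      rw [hk, pow_add, hDsq, zero_mul]
    have hC : Ideal.Quotient.mk J (MonoidAlgebra.of ℤ R (a + b)) = A + B - D := by
      rw [hD, map_sub (Ideal.Quotient.mk J), map_add (Ideal.Quotient.mk J), ← hA, ← hB]; ring
    have hof : ∀ z : R, Ideal.Quotient.mk J (MonoidAlgebra.of ℤ R (z ^ p))
        = (Ideal.Quotient.mk J (MonoidAlgebra.of ℤ R z)) ^ p := by
      intro z; rw [map_pow, map_pow]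
    rw [map_sub (Ideal.Quotient.mk J), map_add (Ideal.Quotient.mk J), hof, hof, hof,
      ← hA, ← hB, hC, sub_pow_char, add_pow_char, hDp]
    ring
  -- the retraction argument: `mk J = σ ∘ π`
  let σ : R →+ (ZR R ⧸ J) := AddMonoidHom.mk'
    (fun r => Ideal.Quotient.mk J (MonoidAlgebra.of ℤ R r))
    (fun x y => by
      have h := hd x y
      rw [← Ideal.Quotient.eq_zero_iff_mem, map_sub, map_add, sub_eq_zero] at h
      exact h.symm)
  have key : (Ideal.Quotient.mk J).toAddMonoidHom
      = σ.comp (piHom R).toAddMonoidHom := by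
    apply MonoidAlgebra.addMonoidHom_ext
    intro r n
    have hsingle : (MonoidAlgebra.single r n : ZR R) = n • MonoidAlgebra.of ℤ R r := by
      rw [MonoidAlgebra.of_apply, MonoidAlgebra.smul_single', mul_one]
    show Ideal.Quotient.mk J (MonoidAlgebra.single r n) = σ (piHom R (MonoidAlgebra.single r n))
    rw [hsingle, map_zsmul, map_zsmul, map_zsmul, piHom_of]
    rfl
  intro t ht
  have h1 : Ideal.Quotient.mk J t = σ (piHom R t) :=
    congrArg (fun h : ZR R →+ ZR R ⧸ J => h t) key
  rw [of_mem_Iid_iff.mp ht, map_zero] at h1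
  rwa [← Ideal.Quotient.eq_zero_iff_mem]

lemma Iid_pow_le_span_sup (R : Type*) [CommRing R] [CharP R p]
    (hperf : Function.Bijective fun x : R => x ^ p) (ν : ℕ) :
    (Iid R) ^ ν ≤ Ideal.span {((p : ℕ) : ZR R)} ^ ν ⊔ (Iid R) ^ (ν + 1) := by
  induction ν with
  | zero => rw [pow_zero]; exact le_sup_left.trans' (by rw [pow_zero])
  | succ ν ih =>
    have hsp : Ideal.span {((p : ℕ) : ZR R)} ≤ Iid R := by
      rw [Ideal.span_le, Set.singleton_subset_iff]
      exact p_mem_Iid (p := p) R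
    calc (Iid R) ^ (ν + 1) = (Iid R) ^ ν * Iid R := pow_succ _ _
      _ ≤ (Ideal.span {((p : ℕ) : ZR R)} ^ ν ⊔ (Iid R) ^ (ν + 1))
          * (Ideal.span {((p : ℕ) : ZR R)} ⊔ (Iid R) ^ 2) :=
        Ideal.mul_mono ih (Iid_le_span_p_sup_sq R hperf)
      _ ≤ Ideal.span {((p : ℕ) : ZR R)} ^ (ν + 1) ⊔ (Iid R) ^ (ν + 2) := by
        rw [Ideal.sup_mul, Ideal.mul_sup, Ideal.mul_sup]
        refine sup_le (sup_le ?_ ?_) (sup_le ?_ ?_)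
        · exact le_sup_left.trans' (pow_succ _ _).symm.le
        · refine le_sup_right.trans' ?_
          calc Ideal.span {((p : ℕ) : ZR R)} ^ ν * (Iid R) ^ 2
              ≤ (Iid R) ^ ν * (Iid R) ^ 2 := Ideal.mul_mono (Ideal.pow_right_mono hsp ν) le_rfl
            _ = (Iid R) ^ (ν + 2) := (pow_add _ _ _).symm
        · refine le_sup_right.trans' ?_
          calc (Iid R) ^ (ν + 1) * Ideal.span {((p : ℕ) : ZR R)}
              ≤ (Iid R) ^ (ν + 1) * Iid R := Ideal.mul_mono le_rfl hsp
            _ = (Iid R) ^ (ν + 2) := (pow_succ _ _).symm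
        · refine le_sup_right.trans' ?_
          calc (Iid R) ^ (ν + 1) * (Iid R) ^ 2 = (Iid R) ^ (ν + 1 + 2) := (pow_add _ _ _).symm
            _ ≤ (Iid R) ^ (ν + 2) := Ideal.pow_le_pow_right (by omega)

/-- Hard direction: if `θ(a) ∈ p^ν W(R)` then `a ∈ I^ν` (R perfect). -/
lemma mem_pow_of_theta (R : Type*) [CommRing R] [CharP R p] [PerfectRing R p]
    (hperf : Function.Bijective fun x : R => x ^ p) :
    ∀ (ν : ℕ) (a : ZR R), (∃ u, theta p R a = u * (p : WittVector p R) ^ ν)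
      → a ∈ (Iid R) ^ ν := by
  intro ν
  induction ν with
  | zero => intro a _; rw [pow_zero, Ideal.one_eq_top]; trivial
  | succ ν ih =>
    rintro a ⟨u, hu⟩
    have ha : a ∈ (Iid R) ^ ν := ih a ⟨u * p, by rw [hu]; ring⟩
    have hsup := Iid_pow_le_span_sup R hperf ν ha
    rw [Ideal.span_singleton_pow] at hsup
    obtain ⟨s, hs, e, he, hse⟩ := Submodule.mem_sup.mp hsup
    obtain ⟨b, hb⟩ := Ideal.mem_span_singleton.mp hs
    obtain ⟨w, hw⟩ := theta_mem_pow (p := p) (ν + 1) he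
    have hsum : theta p R a = theta p R b * (p : WittVector p R) ^ ν
        + w * (p : WittVector p R) ^ (ν + 1) := by
      rw [← hse, map_add, hw, hb, map_mul, map_pow, map_natCast]
      ring
    have h2 : theta p R b * (p : WittVector p R) ^ ν
        = ((u - w) * p) * (p : WittVector p R) ^ ν := by
      rw [hu] at hsum
      linear_combination -hsum
    have hbθ : theta p R b = (u - w) * p := mul_pow_p_cancel ν h2
    have hbI : b ∈ Iid R := by
      rw [of_mem_Iid_iff, ← coeff_zero_theta (p := p), hbθ]
      exact mul_p_coeff_zero _
    have hsI : s ∈ (Iid R) ^ (ν + 1) := by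
      rw [hb, pow_succ]
      exact Ideal.mul_mem_mul (Ideal.pow_mem_pow (p_mem_Iid (p := p) R) ν) hbI
    rw [← hse]
    exact Ideal.add_mem _ hsI he

/-- Naturality of `θ`. -/
lemma theta_comp_ZRmap {R₁ R₂ : Type*} [CommRing R₁] [CommRing R₂] (f : R₁ →+* R₂) :
    (theta p R₂).comp (ZRmap f) = (WittVector.map f).comp (theta p R₁) := by
  apply ZR_ringHom_ext
  intro r
  rw [RingHom.comp_apply, RingHom.comp_apply, ZRmap_of, theta_of, theta_of,
    WittVector.map_teichmuller]

end Aux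

/-- Let `p` be a prime and `f : R₁ → R₂` a ring homomorphism of perfect
`𝔽_p`-algebras, and `C(f) : C(R₁) → C(R₂)` the functorially induced ring homomorphism.
If `f` is injective then `C(f)` is injective, and if `f` is surjective then `C(f)` is
surjective. -/
theorem statement11 (p : ℕ) [Fact p.Prime] (R₁ R₂ : Type*) [CommRing R₁] [CommRing R₂]
    [CharP R₁ p] [CharP R₂ p]
    (hperf₁ : Function.Bijective fun x : R₁ => x ^ p)
    (hperf₂ : Function.Bijective fun x : R₂ => x ^ p)
    (f : R₁ →+* R₂) :
    (Function.Injective f → Function.Injective (Cmap f)) ∧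
    (Function.Surjective f → Function.Surjective (Cmap f)) := by
  haveI : ExpChar R₁ p := ExpChar.prime Fact.out
  haveI : ExpChar R₂ p := ExpChar.prime Fact.out
  haveI hPR1 : PerfectRing R₁ p := ⟨by
    have h : ⇑(_root_.frobenius R₁ p) = fun x : R₁ => x ^ p := funext fun x => frobenius_def p x
    exact hperf₁⟩
  haveI hPR2 : PerfectRing R₂ p := ⟨by
    have h : ⇑(_root_.frobenius R₂ p) = fun x : R₂ => x ^ p := funext fun x => frobenius_def p x
    exact hperf₂⟩
  constructor
  · -- injectivity
    intro hinj
    rw [injective_iff_map_eq_zero]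
    intro x hx
    have hcomp : ∀ ν : ℕ, (x : Π ν : ℕ, ZR R₁ ⧸ (Iid R₁) ^ ν) ν = 0 := by
      intro ν
      obtain ⟨a, ha⟩ := Ideal.Quotient.mk_surjective ((x : Π ν : ℕ, ZR R₁ ⧸ (Iid R₁) ^ ν) ν)
      have h0 : Ideal.quotientMap ((Iid R₂) ^ ν) (ZRmap f) (Iid_pow_le f ν)
          ((x : Π ν : ℕ, ZR R₁ ⧸ (Iid R₁) ^ ν) ν) = 0 :=
        congrArg (fun z : CR R₂ => (z : Π ν : ℕ, ZR R₂ ⧸ (Iid R₂) ^ ν) ν) hx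
      rw [← ha, Ideal.quotientMap_mk, Ideal.Quotient.eq_zero_iff_mem] at h0
      obtain ⟨u, hu⟩ := theta_mem_pow (p := p) ν h0
      have hnat : theta p R₂ (ZRmap f a) = WittVector.map f (theta p R₁ a) :=
        congrArg (fun g : ZR R₁ →+* WittVector p R₂ => g a) (theta_comp_ZRmap (p := p) f)
      have hc : ∀ i < ν, (theta p R₁ a).coeff i = 0 := by
        intro i hi
        have h1 : f ((theta p R₁ a).coeff i) = f 0 := by
          rw [← WittVector.map_coeff, ← hnat, hu, map_zero]
          exact mul_pow_p_coeff ν u hi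
        exact hinj h1
      obtain ⟨u', hu'⟩ := exists_eq_mul_pow_p ν _ hc
      have hmem : a ∈ (Iid R₁) ^ ν := mem_pow_of_theta R₁ hperf₁ ν a ⟨u', hu'⟩
      rw [← ha, Ideal.Quotient.eq_zero_iff_mem]
      exact hmem
    exact Subtype.ext (funext hcomp)
  · -- surjectivity
    intro hf y
    have hgsurj : Function.Surjective (ZRmap f) := by
      intro z
      induction z using MonoidAlgebra.induction with
      | zero => exact ⟨0, map_zero _⟩
      | single_add r b z _ _ ih =>
        obtain ⟨w, hw⟩ := ih
        obtain ⟨r', hr'⟩ := hf r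
        refine ⟨MonoidAlgebra.single r' b + w, ?_⟩
        rw [map_add, hw]
        congr 1
        simp [ZRmap, Finsupp.mapDomain_single, hr']
    have hpi : ∀ s : ZR R₁, piHom R₂ (ZRmap f s) = f (piHom R₁ s) := by
      intro s
      have h := congrArg (fun g : ZR R₁ →+* R₂ => g s) (piHom_comp_ZRmap f)
      simpa using h
    have hmap : Ideal.map (ZRmap f) (Iid R₁) = Iid R₂ := by
      apply le_antisymm
      · rw [Ideal.map_le_iff_le_comap]
        intro z hz
        rw [Ideal.mem_comap, of_mem_Iid_iff, hpi, of_mem_Iid_iff.mp hz, map_zero]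
      · intro t ht
        obtain ⟨s, hgs⟩ := hgsurj t
        have hfs : f (piHom R₁ s) = 0 := by
          rw [← hpi, hgs]
          exact of_mem_Iid_iff.mp ht
        have hmem : s - MonoidAlgebra.of ℤ R₁ (piHom R₁ s) + MonoidAlgebra.of ℤ R₁ 0
            ∈ Iid R₁ := by
          rw [of_mem_Iid_iff, map_add, map_sub, piHom_of, piHom_of, sub_self, zero_add]
        have himg : ZRmap f (s - MonoidAlgebra.of ℤ R₁ (piHom R₁ s) + MonoidAlgebra.of ℤ R₁ 0)
            = t := by
          rw [map_add, map_sub, hgs, ZRmap_of, ZRmap_of, hfs, map_zero f]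
          ring
        rw [← himg]
        exact Ideal.mem_map_of_mem _ hmem
    have hmappow : ∀ ν : ℕ, Ideal.map (ZRmap f) ((Iid R₁) ^ ν) = (Iid R₂) ^ ν := by
      intro ν; rw [Ideal.map_pow, hmap]
    haveI hss : Subsingleton (ZR R₂ ⧸ (Iid R₂) ^ 0) :=
      Ideal.Quotient.subsingleton_iff.mpr (by rw [pow_zero, Ideal.one_eq_top])
    have key : ∀ (ν : ℕ) (a : ZR R₁),
        Ideal.Quotient.mk ((Iid R₂) ^ ν) (ZRmap f a) = (y : Π ν : ℕ, ZR R₂ ⧸ (Iid R₂) ^ ν) ν →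
        ∃ δ, δ ∈ (Iid R₁) ^ ν ∧ Ideal.Quotient.mk ((Iid R₂) ^ (ν + 1)) (ZRmap f (a + δ))
          = (y : Π ν : ℕ, ZR R₂ ⧸ (Iid R₂) ^ ν) (ν + 1) := by
      intro ν a hA
      obtain ⟨t, ht⟩ := Ideal.Quotient.mk_surjective ((y : Π ν : ℕ, ZR R₂ ⧸ (Iid R₂) ^ ν) (ν + 1))
      have hyν : Ideal.Quotient.mk ((Iid R₂) ^ ν) t = (y : Π ν : ℕ, ZR R₂ ⧸ (Iid R₂) ^ ν) ν := by
        have hcompat := y.2 (Nat.le_succ ν)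
        rw [← hcompat, ← ht, Ideal.Quotient.factor_mk]
      have hdiff : ZRmap f a - t ∈ (Iid R₂) ^ ν :=
        Ideal.Quotient.eq.mp (by rw [hA, hyν])
      rw [← hmappow ν] at hdiff
      obtain ⟨δ₀, hδ₀, hgδ₀⟩ := (Ideal.mem_map_iff_of_surjective _ hgsurj).mp hdiff
      refine ⟨-δ₀, neg_mem hδ₀, ?_⟩
      have hval : ZRmap f (a + -δ₀) = t := by
        rw [map_add, map_neg, hgδ₀]
        ring
      rw [hval, ht]
    let A : ∀ ν : ℕ, {a : ZR R₁ //
        Ideal.Quotient.mk ((Iid R₂) ^ ν) (ZRmap f a) = (y : Π ν : ℕ, ZR R₂ ⧸ (Iid R₂) ^ ν) ν} :=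
      fun ν => Nat.rec ⟨0, Subsingleton.elim _ _⟩
        (fun ν prev => ⟨prev.1 + (key ν prev.1 prev.2).choose,
          (key ν prev.1 prev.2).choose_spec.2⟩) ν
    have hAdiff : ∀ ν : ℕ, (A (ν + 1)).1 - (A ν).1 ∈ (Iid R₁) ^ ν := by
      intro ν
      have hr : (A (ν + 1)).1 = (A ν).1 + (key ν (A ν).1 (A ν).2).choose := rfl
      rw [hr, add_sub_cancel_left]
      exact (key ν (A ν).1 (A ν).2).choose_spec.1
    have hchain : ∀ m ν : ℕ, m ≤ ν → (A ν).1 - (A m).1 ∈ (Iid R₁) ^ m := by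
      intro m ν h
      induction ν, h using Nat.le_induction with
      | base => rw [sub_self]; exact zero_mem _
      | succ ν hmν ih =>
        have : (A (ν + 1)).1 - (A m).1
            = ((A (ν + 1)).1 - (A ν).1) + ((A ν).1 - (A m).1) := by ring
        rw [this]
        exact add_mem (Ideal.pow_le_pow_right hmν (hAdiff ν)) ih
    refine ⟨⟨fun ν => Ideal.Quotient.mk ((Iid R₁) ^ ν) ((A ν).1), ?_⟩, ?_⟩
    · intro m ν h
      rw [Ideal.Quotient.factor_mk]
      exact Ideal.Quotient.eq.mpr (hchain m ν h)
    · apply Subtype.ext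
      funext ν
      show Ideal.quotientMap ((Iid R₂) ^ ν) (ZRmap f) (Iid_pow_le f ν)
        (Ideal.Quotient.mk ((Iid R₁) ^ ν) ((A ν).1)) = (y : Π ν : ℕ, ZR R₂ ⧸ (Iid R₂) ^ ν) ν
      rw [Ideal.quotientMap_mk]
      exact (A ν).2
end
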